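/- Let μ be a probability measure on 𝒞_n admitting a decomposition μ = ∫ μ_θ dη(θ), where η is a probability measure on a parameter space and each μ_θ is a probability measure on 𝒞_n. Then for every φ : 𝒞_n → ℝ, the Dirichlet forms satisfy ∫ ℰ_{μ_θ}(φ) dη(θ) ≤ ℰ_μ(φ). -/
import Mathlib


noncomputable section

open scoped BigOperators
open MeasureTheory

lemma harm_nonneg (a b : ℝ) (ha : 0 ≤ a) (hb : 0 ≤ b) : 0 ≤ a * b / (a + b) :=
  div_nonneg (mul_nonneg ha hb) (add_nonneg ha hb)

lemma harm_le_left (a b : ℝ) (ha : 0 ≤ a) (hb : 0 ≤ b) : a * b / (a + b) ≤ a := by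
  rcases eq_or_lt_of_le (add_nonneg ha hb) with h | h
  · have ha0 : a = 0 := le_antisymm (by linarith) ha
    simp [ha0]
  · rw [div_le_iff₀ h]; nlinarith

lemma harm_le_quad (a b t : ℝ) (ha : 0 ≤ a) (hb : 0 ≤ b) :
    a * b / (a + b) ≤ t ^ 2 * a + (1 - t) ^ 2 * b := by
  rcases eq_or_lt_of_le (add_nonneg ha hb) with h | h
  · have ha0 : a = 0 := le_antisymm (by linarith) ha
    have hb0 : b = 0 := le_antisymm (by linarith) hb
    simp [ha0, hb0]
  · rw [div_le_iff₀ h]; nlinarith [sq_nonneg (t * a - (1 - t) * b)]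

lemma key_lemma {Θ : Type*} [MeasurableSpace Θ] (η : Measure Θ) [IsProbabilityMeasure η]
    (f g : Θ → ℝ) (hfm : Measurable f) (hgm : Measurable g)
    (hf0 : ∀ θ, 0 ≤ f θ) (hg0 : ∀ θ, 0 ≤ g θ)
    (hf1 : ∀ θ, f θ ≤ 1) (hg1 : ∀ θ, g θ ≤ 1) :
    ∫ θ, f θ * g θ / (f θ + g θ) ∂η ≤
      (∫ θ, f θ ∂η) * (∫ θ, g θ ∂η) / ((∫ θ, f θ ∂η) + (∫ θ, g θ ∂η)) := by
  have hfi : Integrable f η := by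
    refine (integrable_const (1 : ℝ)).mono' hfm.aestronglyMeasurable ?_
    filter_upwards with θ
    rw [Real.norm_eq_abs, abs_le]
    exact ⟨by linarith [hf0 θ], hf1 θ⟩
  have hgi : Integrable g η := by
    refine (integrable_const (1 : ℝ)).mono' hgm.aestronglyMeasurable ?_
    filter_upwards with θ
    rw [Real.norm_eq_abs, abs_le]
    exact ⟨by linarith [hg0 θ], hg1 θ⟩
  have hqm : Measurable (fun θ => f θ * g θ / (f θ + g θ)) :=
    (hfm.mul hgm).div (hfm.add hgm)
  have hqi : Integrable (fun θ => f θ * g θ / (f θ + g θ)) η := by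
    refine (integrable_const (1 : ℝ)).mono' hqm.aestronglyMeasurable ?_
    filter_upwards with θ
    rw [Real.norm_eq_abs, abs_le]
    exact ⟨by linarith [harm_nonneg (f θ) (g θ) (hf0 θ) (hg0 θ)],
      le_trans (harm_le_left (f θ) (g θ) (hf0 θ) (hg0 θ)) (hf1 θ)⟩
  set A := ∫ θ, f θ ∂η with hA
  set B := ∫ θ, g θ ∂η with hB
  have hA0 : 0 ≤ A := integral_nonneg hf0
  have hB0 : 0 ≤ B := integral_nonneg hg0
  rcases eq_or_lt_of_le (add_nonneg hA0 hB0) with h | h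
  · -- A = B = 0
    have hA0' : A = 0 := le_antisymm (by linarith) hA0
    have hfz : f =ᵐ[η] 0 := by
      rw [← integral_eq_zero_iff_of_nonneg hf0 hfi, ← hA]; exact hA0'
    have : (fun θ => f θ * g θ / (f θ + g θ)) =ᵐ[η] 0 := by
      filter_upwards [hfz] with θ hθ
      simp only [Pi.zero_apply] at hθ ⊢
      simp [hθ]
    rw [integral_congr_ae this]
    simpa using harm_nonneg A B hA0 hB0
  · set t := B / (A + B) with ht
    have hpt : ∀ θ, f θ * g θ / (f θ + g θ) ≤ t ^ 2 * f θ + (1 - t) ^ 2 * g θ :=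
      fun θ => harm_le_quad (f θ) (g θ) t (hf0 θ) (hg0 θ)
    have hri : Integrable (fun θ => t ^ 2 * f θ + (1 - t) ^ 2 * g θ) η :=
      (hfi.const_mul _).add (hgi.const_mul _)
    calc ∫ θ, f θ * g θ / (f θ + g θ) ∂η
        ≤ ∫ θ, (t ^ 2 * f θ + (1 - t) ^ 2 * g θ) ∂η := integral_mono hqi hri hpt
      _ = t ^ 2 * A + (1 - t) ^ 2 * B := by
          rw [integral_add (hfi.const_mul _) (hgi.const_mul _),
            integral_const_mul, integral_const_mul]
      _ = A * B / (A + B) := by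
          rw [ht]
          field_simp
          ring

/-- The Boolean string `b` with its `i`-th coordinate flipped. -/
def flipCoord {n : ℕ} (b : Fin n → Bool) (i : Fin n) : Fin n → Bool :=
  Function.update b i (!(b i))

/-- The Dirichlet form of Glauber dynamics:
`ℰ_ν(φ) = Σ_{x,y differing in one coordinate} (φ(x)-φ(y))² ν(x)ν(y)/(ν(x)+ν(y))`
(with the convention `0/0 = 0`, which is Lean's default). -/
def dirichletForm {n : ℕ} (ν φ : (Fin n → Bool) → ℝ) : ℝ :=
  ∑ b, ∑ i, (φ b - φ (flipCoord b i)) ^ 2 *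
    (ν b * ν (flipCoord b i) / (ν b + ν (flipCoord b i)))

/-- **Concavity of the Dirichlet form under mixtures** (Lemma `dirichlet` of the paper):
if `μ = ∫ μ_θ dη(θ)` is a mixture of probability measures on the cube, then
`∫ ℰ_{μ_θ}(φ) dη(θ) ≤ ℰ_μ(φ)`. -/
theorem dirichletForm_concave (n : ℕ) {Θ : Type*} [MeasurableSpace Θ]
    (η : Measure Θ) [IsProbabilityMeasure η]
    (μ : (Fin n → Bool) → ℝ) (ν : Θ → (Fin n → Bool) → ℝ)
    (hμ : (∀ b, 0 ≤ μ b) ∧ (∑ b, μ b) = 1)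
    (hν : ∀ θ, (∀ b, 0 ≤ ν θ b) ∧ (∑ b, ν θ b) = 1)
    (hmeas : ∀ b, Measurable fun θ => ν θ b)
    (hdecomp : ∀ b, μ b = ∫ θ, ν θ b ∂η)
    (φ : (Fin n → Bool) → ℝ) :
    ∫ θ, dirichletForm (ν θ) φ ∂η ≤ dirichletForm μ φ := by
  have hν1 : ∀ θ b, ν θ b ≤ 1 := by
    intro θ b
    calc ν θ b ≤ ∑ b', ν θ b' :=
          Finset.single_le_sum (fun b' _ => (hν θ).1 b') (Finset.mem_univ b)
      _ = 1 := (hν θ).2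
  have hqi : ∀ b c : Fin n → Bool,
      Integrable (fun θ => ν θ b * ν θ c / (ν θ b + ν θ c)) η := by
    intro b c
    refine (integrable_const (1 : ℝ)).mono'
      (((hmeas b).mul (hmeas c)).div ((hmeas b).add (hmeas c))).aestronglyMeasurable ?_
    filter_upwards with θ
    rw [Real.norm_eq_abs, abs_le]
    exact ⟨by linarith [harm_nonneg (ν θ b) (ν θ c) ((hν θ).1 b) ((hν θ).1 c)],
      le_trans (harm_le_left (ν θ b) (ν θ c) ((hν θ).1 b) ((hν θ).1 c)) (hν1 θ b)⟩
  have hti : ∀ (b : Fin n → Bool) (i : Fin n),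
      Integrable (fun θ => (φ b - φ (flipCoord b i)) ^ 2 *
        (ν θ b * ν θ (flipCoord b i) / (ν θ b + ν θ (flipCoord b i)))) η :=
    fun b i => (hqi b (flipCoord b i)).const_mul _
  calc ∫ θ, dirichletForm (ν θ) φ ∂η
      = ∑ b, ∑ i, ∫ θ, (φ b - φ (flipCoord b i)) ^ 2 *
          (ν θ b * ν θ (flipCoord b i) / (ν θ b + ν θ (flipCoord b i))) ∂η := by
        simp only [dirichletForm]
        rw [integral_finset_sum _ (fun b _ => integrable_finset_sum _ (fun i _ => hti b i))]
        exact Finset.sum_congr rfl fun b _ => integral_finset_sum _ (fun i _ => hti b i)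
    _ ≤ dirichletForm μ φ := by
        unfold dirichletForm
        refine Finset.sum_le_sum fun b _ => Finset.sum_le_sum fun i _ => ?_
        rw [integral_const_mul]
        refine mul_le_mul_of_nonneg_left ?_ (sq_nonneg _)
        rw [hdecomp b, hdecomp (flipCoord b i)]
        exact key_lemma η _ _ (hmeas b) (hmeas (flipCoord b i))
          (fun θ => (hν θ).1 b) (fun θ => (hν θ).1 (flipCoord b i))
          (fun θ => hν1 θ b) (fun θ => hν1 θ (flipCoord b i))
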